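/- Let ρ>0 and φ∈(0,1). The function (x,y) ↦ x^{ρφ} y^{ρφ} is uniformly continuous on [0,a]×[0,b], and consequently the family {A(υ) : ‖υ‖_∞ ≤ k} of functions A(υ)(x,y) = I_{0+}^{(φ,φ),(ρ,ρ)}[F(·,·,υ)](x,y), with F continuous and bounded by M on [0,a]×[0,b]×[−k,k], is uniformly equicontinuous. -/

import Mathlib

open Real MeasureTheory

namespace KatAux

open intervalIntegral Set


/-- The one-dimensional kernel. -/
noncomputable def ker (ρ φ x s : ℝ) : ℝ := s ^ (ρ - 1) * (x ^ ρ - s ^ ρ) ^ (φ - 1)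

variable {ρ φ : ℝ}

lemma ker_nonneg (hρ : 0 < ρ) {x s : ℝ} (hs : 0 ≤ s) (hsx : s ≤ x) :
    0 ≤ ker ρ φ x s := by
  apply mul_nonneg (Real.rpow_nonneg hs _)
  exact Real.rpow_nonneg (by simpa using Real.rpow_le_rpow hs hsx hρ.le) _

lemma ker_anti (hρ : 0 < ρ) (hφ1 : φ < 1) {x₁ x₂ s : ℝ} (hs : 0 ≤ s) (hsx : s < x₁)
    (hx12 : x₁ ≤ x₂) : ker ρ φ x₂ s ≤ ker ρ φ x₁ s := by
  apply mul_le_mul_of_nonneg_left _ (Real.rpow_nonneg hs _)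
  apply Real.rpow_le_rpow_of_nonpos
  · have := Real.rpow_lt_rpow hs hsx hρ
    linarith
  · have := Real.rpow_le_rpow (hs.trans hsx.le) hx12 hρ.le
    linarith
  · linarith

lemma ker_measurable (ρ φ x : ℝ) : Measurable (ker ρ φ x) := by
  unfold ker; fun_prop

lemma ker_self (hρ : 0 < ρ) (hφ1 : φ < 1) (x : ℝ) : ker ρ φ x x = 0 := by
  simp [ker, Real.zero_rpow (by linarith : φ - 1 ≠ 0)]







lemma ker_intervalIntegrable (hρ : 0 < ρ) (hφ0 : 0 < φ) (hφ1 : φ < 1) {x : ℝ} (hx : 0 ≤ x) :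
    IntervalIntegrable (ker ρ φ x) volume 0 x := by
  rcases eq_or_lt_of_le hx with h | hxpos
  · subst h; exact IntervalIntegrable.refl
  have hker_meas : Measurable (ker ρ φ x) := by unfold ker; fun_prop
  have hhalf : 0 < x / 2 := by linarith
  have hd : (x/2) ^ ρ < x ^ ρ := Real.rpow_lt_rpow hhalf.le (by linarith) hρ
  set d : ℝ := x ^ ρ - (x/2) ^ ρ with hd_def
  have hdpos : 0 < d := sub_pos.mpr hd
  have I1 : IntervalIntegrable (ker ρ φ x) volume 0 (x/2) := by
    apply IntervalIntegrable.mono_fun' (g := fun s => d ^ (φ - 1) * s ^ (ρ - 1))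
    · exact (intervalIntegrable_rpow' (by linarith)).const_mul _
    · exact hker_meas.aestronglyMeasurable
    · rw [uIoc_of_le hhalf.le]
      filter_upwards [ae_restrict_mem measurableSet_Ioc] with s hs
      have hs0 : 0 < s := hs.1
      have hsx : s ≤ x / 2 := hs.2
      rw [Real.norm_eq_abs, abs_of_nonneg (ker_nonneg hρ hs0.le (by linarith))]
      unfold ker
      rw [mul_comm (d ^ (φ - 1))]
      apply mul_le_mul_of_nonneg_left _ (Real.rpow_nonneg hs0.le _)
      apply Real.rpow_le_rpow_of_nonpos hdpos _ (by linarith)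
      have : s ^ ρ ≤ (x/2) ^ ρ := Real.rpow_le_rpow hs0.le hsx hρ.le
      simp only [hd_def]; linarith
  have I2 : IntervalIntegrable (ker ρ φ x) volume (x/2) x := by
    set C : ℝ := max ((x/2) ^ (ρ - 1)) (x ^ (ρ - 1)) with hC_def
    set m : ℝ := ρ * min ((x/2) ^ (ρ - 1)) (x ^ (ρ - 1)) with hm_def
    have hm : 0 < m := mul_pos hρ
      (lt_min (Real.rpow_pos_of_pos hhalf _) (Real.rpow_pos_of_pos (by linarith) _))
    have hC : 0 < C := lt_max_of_lt_left (Real.rpow_pos_of_pos hhalf _)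
    have hmin_le : ∀ s ∈ Icc (x/2) x, min ((x/2) ^ (ρ - 1)) (x ^ (ρ - 1)) ≤ s ^ (ρ - 1) := by
      intro s hs
      rcases le_total 1 ρ with h1 | h1
      · exact (min_le_left _ _).trans (Real.rpow_le_rpow hhalf.le hs.1 (by linarith))
      · exact (min_le_right _ _).trans
          (Real.rpow_le_rpow_of_nonpos (hhalf.trans_le hs.1) hs.2 (by linarith))
    have key : ∀ s ∈ Icc (x/2) x, m * (x - s) ≤ x ^ ρ - s ^ ρ := by
      intro s hs
      set f : ℝ → ℝ := fun s => x ^ ρ - s ^ ρ - m * (x - s) with hf_def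
      have hderiv : ∀ s : ℝ, 0 < s → HasDerivAt f (-(ρ * s ^ (ρ - 1)) + m) s := by
        intro s hs0
        have h1 : HasDerivAt (fun s : ℝ => s ^ ρ) (ρ * s ^ (ρ - 1)) s := by
          simpa [mul_comm] using Real.hasDerivAt_rpow_const (p := ρ) (Or.inl hs0.ne')
        have h2 : HasDerivAt (fun s : ℝ => x ^ ρ - s ^ ρ) (-(ρ * s ^ (ρ - 1))) s := by
          simpa using (hasDerivAt_const s (x ^ ρ)).fun_sub h1
        have h3 : HasDerivAt (fun s : ℝ => m * (x - s)) (-m) s := by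
          simpa using ((hasDerivAt_const s x).sub (hasDerivAt_id s)).const_mul m
        simpa [sub_neg_eq_add] using h2.fun_sub h3
      have hanti : AntitoneOn f (Icc (x/2) x) := by
        apply antitoneOn_of_deriv_nonpos (convex_Icc _ _)
        · exact (((continuous_const.sub (Real.continuous_rpow_const hρ.le)).sub
            (continuous_const.mul (continuous_const.sub continuous_id))).continuousOn)
        · intro s hs
          rw [interior_Icc] at hs
          exact (hderiv s (hhalf.trans hs.1)).differentiableAt.differentiableWithinAt
        · intro s hs
          rw [interior_Icc] at hs
          rw [(hderiv s (hhalf.trans hs.1)).deriv]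
          have : m ≤ ρ * s ^ (ρ - 1) := by
            rw [hm_def]
            exact mul_le_mul_of_nonneg_left
              (hmin_le s ⟨hs.1.le, hs.2.le⟩) hρ.le
          linarith
      have hfx : f x = 0 := by simp [hf_def]
      have := hanti hs (right_mem_Icc.mpr (by linarith)) hs.2
      rw [hfx] at this
      simp only [hf_def] at this
      linarith
    apply IntervalIntegrable.mono_fun'
      (g := fun s => (C * m ^ (φ - 1)) * (x - s) ^ (φ - 1))
    · have base := ((intervalIntegrable_rpow' (r := φ - 1) (by linarith)
        (a := x/2) (b := 0)).comp_sub_left x)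
      rw [show x - x/2 = x/2 by ring, sub_zero] at base
      exact base.const_mul _
    · exact hker_meas.aestronglyMeasurable
    · rw [uIoc_of_le (by linarith : x/2 ≤ x)]
      filter_upwards [ae_restrict_mem measurableSet_Ioc] with s hs
      have hs0 : 0 < s := hhalf.trans hs.1
      rw [Real.norm_eq_abs, abs_of_nonneg (ker_nonneg hρ hs0.le hs.2)]
      unfold ker
      have h1 : s ^ (ρ - 1) ≤ C := by
        rcases le_total 1 ρ with h | h
        · exact (Real.rpow_le_rpow hs0.le hs.2 (by linarith)).trans (le_max_right _ _)
        · exact (Real.rpow_le_rpow_of_nonpos hhalf hs.1.le (by linarith)).trans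
            (le_max_left _ _)
      have h2 : (x ^ ρ - s ^ ρ) ^ (φ - 1) ≤ m ^ (φ - 1) * (x - s) ^ (φ - 1) := by
        rw [← Real.mul_rpow hm.le (by linarith [hs.2] : (0:ℝ) ≤ x - s)]
        rcases eq_or_lt_of_le hs.2 with hsx | hsx
        · rw [hsx]
          simp [Real.zero_rpow (by linarith : φ - 1 ≠ 0)]
        · exact Real.rpow_le_rpow_of_nonpos
            (mul_pos hm (by linarith)) (key s ⟨hs.1.le, hs.2⟩) (by linarith)
      calc s ^ (ρ - 1) * (x ^ ρ - s ^ ρ) ^ (φ - 1)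
          ≤ C * (m ^ (φ - 1) * (x - s) ^ (φ - 1)) := by
            apply mul_le_mul h1 h2 (Real.rpow_nonneg ?_ _) hC.le
            have := Real.rpow_le_rpow hs0.le hs.2 hρ.le
            linarith
        _ = (C * m ^ (φ - 1)) * (x - s) ^ (φ - 1) := by ring
  exact I1.trans I2





noncomputable def Gf (ρ φ x w : ℝ) : ℝ :=
  ((x ^ ρ - (0:ℝ) ^ ρ) ^ φ - (x ^ ρ - w ^ ρ) ^ φ) / (ρ * φ)








lemma ker_intervalIntegrable' (hρ : 0 < ρ) (hφ0 : 0 < φ) (hφ1 : φ < 1) {x w₁ w₂ : ℝ}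
    (h0 : 0 ≤ w₁) (h12 : w₁ ≤ w₂) (h2x : w₂ ≤ x) :
    IntervalIntegrable (ker ρ φ x) volume w₁ w₂ := by
  apply (ker_intervalIntegrable hρ hφ0 hφ1 (h0.trans (h12.trans h2x))).mono_set'
  rw [uIoc_of_le h12, uIoc_of_le (h0.trans (h12.trans h2x))]
  exact Ioc_subset_Ioc h0 h2x

lemma ker_integral (hρ : 0 < ρ) (hφ0 : 0 < φ) (hφ1 : φ < 1) {x w₁ w₂ : ℝ}
    (h0 : 0 ≤ w₁) (h12 : w₁ ≤ w₂) (h2x : w₂ ≤ x) :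
    ∫ s in w₁..w₂, ker ρ φ x s
      = ((x ^ ρ - w₁ ^ ρ) ^ φ - (x ^ ρ - w₂ ^ ρ) ^ φ) / (ρ * φ) := by
  set Φ : ℝ → ℝ := fun s => -((x ^ ρ - s ^ ρ) ^ φ) / (ρ * φ) with hΦ
  have hcont : ContinuousOn Φ (Icc w₁ w₂) :=
    (((Real.continuous_rpow_const hφ0.le).comp
      (continuous_const.sub (Real.continuous_rpow_const hρ.le))).neg.div_const _).continuousOn
  have hderiv : ∀ s ∈ Ioo w₁ w₂, HasDerivWithinAt Φ (ker ρ φ x s) (Ioi s) s := by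
    intro s hs
    have hs0 : 0 < s := lt_of_le_of_lt h0 hs.1
    have hsx : s < x := lt_of_lt_of_le hs.2 h2x
    have hbase : 0 < x ^ ρ - s ^ ρ := sub_pos.mpr (Real.rpow_lt_rpow hs0.le hsx hρ)
    have h1 : HasDerivAt (fun s : ℝ => s ^ ρ) (ρ * s ^ (ρ - 1)) s :=
      Real.hasDerivAt_rpow_const (Or.inl hs0.ne')
    have h2 : HasDerivAt (fun s : ℝ => x ^ ρ - s ^ ρ) (-(ρ * s ^ (ρ - 1))) s := by
      simpa using (hasDerivAt_const s (x ^ ρ)).fun_sub h1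
    have h3 : HasDerivAt (fun z : ℝ => z ^ φ) (φ * (x ^ ρ - s ^ ρ) ^ (φ - 1))
        (x ^ ρ - s ^ ρ) := Real.hasDerivAt_rpow_const (Or.inl hbase.ne')
    have h4 := h3.comp s h2
    have h5 : HasDerivAt Φ (ker ρ φ x s) s := by
      have h6 : HasDerivAt Φ (-(φ * (x ^ ρ - s ^ ρ) ^ (φ - 1) * -(ρ * s ^ (ρ - 1))) / (ρ * φ)) s :=
        h4.fun_neg.div_const (ρ * φ)
      convert h6 using 1
      unfold ker
      field_simp
    exact h5.hasDerivWithinAt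
  rw [integral_eq_sub_of_hasDeriv_right_of_le h12 hcont hderiv
    (ker_intervalIntegrable' hρ hφ0 hφ1 h0 h12 h2x)]
  simp only [hΦ]
  ring

lemma Gf_int (hρ : 0 < ρ) (hφ0 : 0 < φ) (hφ1 : φ < 1) {x w : ℝ} (h0 : 0 ≤ w) (hwx : w ≤ x) :
    ∫ s in (0:ℝ)..w, ker ρ φ x s = Gf ρ φ x w :=
  ker_integral hρ hφ0 hφ1 le_rfl h0 hwx

lemma Gf_diff (hρ : 0 < ρ) (hφ0 : 0 < φ) (hφ1 : φ < 1) {x w₁ w₂ : ℝ}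
    (h0 : 0 ≤ w₁) (h12 : w₁ ≤ w₂) (h2x : w₂ ≤ x) :
    Gf ρ φ x w₂ - Gf ρ φ x w₁ = ∫ s in w₁..w₂, ker ρ φ x s := by
  rw [ker_integral hρ hφ0 hφ1 h0 h12 h2x]
  unfold Gf
  ring

lemma Gf_nonneg (hρ : 0 < ρ) (hφ0 : 0 < φ) (hφ1 : φ < 1) {x w : ℝ} (h0 : 0 ≤ w) (hwx : w ≤ x) :
    0 ≤ Gf ρ φ x w := by
  rw [← Gf_int hρ hφ0 hφ1 h0 hwx]
  apply intervalIntegral.integral_nonneg h0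
  intro s hs
  exact ker_nonneg hρ hs.1 (hs.2.trans hwx)

lemma Gf_anti (hρ : 0 < ρ) (hφ0 : 0 < φ) (hφ1 : φ < 1) {x₁ x₂ w : ℝ}
    (h0 : 0 ≤ w) (hwx : w ≤ x₁) (h12 : x₁ ≤ x₂) :
    Gf ρ φ x₂ w ≤ Gf ρ φ x₁ w := by
  rw [← Gf_int hρ hφ0 hφ1 h0 hwx, ← Gf_int hρ hφ0 hφ1 h0 (hwx.trans h12)]
  apply intervalIntegral.integral_mono_ae_restrict h0
    (ker_intervalIntegrable' hρ hφ0 hφ1 le_rfl h0 (hwx.trans h12))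
    (ker_intervalIntegrable' hρ hφ0 hφ1 le_rfl h0 hwx)
  have h1 : ∀ᵐ t : ℝ, t ≠ w := by
    rw [MeasureTheory.ae_iff]
    have : {t : ℝ | ¬ t ≠ w} = {w} := by ext t; simp
    rw [this]; exact measure_singleton w
  filter_upwards [ae_restrict_mem measurableSet_Icc, ae_restrict_of_ae h1] with t ht hne
  exact ker_anti hρ hφ1 ht.1 (lt_of_lt_of_le (lt_of_le_of_ne ht.2 hne) hwx) h12

lemma Gf_self (hρ : 0 < ρ) (hφ0 : 0 < φ) (y : ℝ) : Gf ρ φ y y = (y ^ ρ) ^ φ / (ρ * φ) := by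
  unfold Gf
  rw [Real.zero_rpow hρ.ne', sub_zero, sub_self, Real.zero_rpow hφ0.ne', sub_zero]

lemma Gf_self_mono (hρ : 0 < ρ) (hφ0 : 0 < φ) {y c : ℝ} (h0 : 0 ≤ y) (hyc : y ≤ c) :
    Gf ρ φ y y ≤ Gf ρ φ c c := by
  rw [Gf_self hρ hφ0, Gf_self hρ hφ0]
  have h1 : (y ^ ρ) ^ φ ≤ (c ^ ρ) ^ φ :=
    Real.rpow_le_rpow (Real.rpow_nonneg h0 _) (Real.rpow_le_rpow h0 hyc hρ.le) hφ0.le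
  have h2 : (0:ℝ) < ρ * φ := by positivity
  exact by gcongr








lemma ae_Ioo_helper {c : ℝ} (hc : 0 ≤ c) {P : ℝ → Prop} (hP : ∀ t ∈ Ioo (0:ℝ) c, P t) :
    ∀ᵐ t ∂(volume.restrict (Set.uIoc (0:ℝ) c)), P t := by
  rw [uIoc_of_le hc]
  have h1 : ∀ᵐ t : ℝ, t ≠ c := by
    rw [MeasureTheory.ae_iff]
    have h2 : {t : ℝ | ¬ t ≠ c} = {c} := by ext t; simp
    rw [h2]; exact measure_singleton c
  filter_upwards [ae_restrict_mem measurableSet_Ioc, ae_restrict_of_ae h1] with t ht hne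
  exact hP t ⟨ht.1, lt_of_le_of_ne ht.2 hne⟩

lemma main_estimate (hρ : 0 < ρ) (hφ0 : 0 < φ) (hφ1 : φ < 1)
    {a b M : ℝ} (hM : 0 < M) {μ : ℝ → ℝ → ℝ}
    (hμm : Measurable fun p : ℝ × ℝ => μ p.1 p.2)
    (hμb : ∀ s ∈ Icc (0:ℝ) a, ∀ t ∈ Icc (0:ℝ) b, |μ s t| ≤ M)
    {x₁ x₂ y₁ y₂ : ℝ} (hx1 : x₁ ∈ Icc (0:ℝ) a) (hx2 : x₂ ∈ Icc (0:ℝ) a)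
    (hy1 : y₁ ∈ Icc (0:ℝ) b) (hy2 : y₂ ∈ Icc (0:ℝ) b) (hx12 : x₁ ≤ x₂) (hy12 : y₁ ≤ y₂) :
    |(∫ s in (0:ℝ)..x₂, ∫ t in (0:ℝ)..y₂, ker ρ φ x₂ s * (ker ρ φ y₂ t * μ s t)) -
      ∫ s in (0:ℝ)..x₁, ∫ t in (0:ℝ)..y₁, ker ρ φ x₁ s * (ker ρ φ y₁ t * μ s t)| ≤
      M * ((Gf ρ φ y₂ y₂ + Gf ρ φ y₁ y₁ - 2 * Gf ρ φ y₂ y₁) * Gf ρ φ x₂ x₁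
        + Gf ρ φ b b * (Gf ρ φ x₁ x₁ - Gf ρ φ x₂ x₁)
        + Gf ρ φ b b * (Gf ρ φ x₂ x₂ - Gf ρ φ x₂ x₁)) := by
  have hb0 : (0:ℝ) ≤ b := hy1.1.trans hy1.2
  have ha0 : (0:ℝ) ≤ a := hx1.1.trans hx1.2
  set L : ℝ → ℝ → ℝ := fun y s => ∫ t in (0:ℝ)..y, ker ρ φ y t * μ s t with hL
  -- bounds on G values
  have hGbb : 0 ≤ Gf ρ φ b b := Gf_nonneg hρ hφ0 hφ1 hb0 le_rfl
  have hG21a : Gf ρ φ y₂ y₁ ≤ Gf ρ φ y₁ y₁ := Gf_anti hρ hφ0 hφ1 hy1.1 le_rfl hy12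
  have hG21b : Gf ρ φ y₂ y₁ ≤ Gf ρ φ y₂ y₂ := by
    have h := Gf_diff hρ hφ0 hφ1 hy1.1 hy12 (le_refl y₂)
    have h2 : 0 ≤ ∫ t in y₁..y₂, ker ρ φ y₂ t :=
      intervalIntegral.integral_nonneg hy12 fun t ht =>
        ker_nonneg hρ (hy1.1.trans ht.1) ht.2
    linarith
  set ΔY : ℝ := Gf ρ φ y₂ y₂ + Gf ρ φ y₁ y₁ - 2 * Gf ρ φ y₂ y₁ with hΔY
  have hΔY0 : 0 ≤ ΔY := by rw [hΔY]; linarith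
  have hGx21a : Gf ρ φ x₂ x₁ ≤ Gf ρ φ x₁ x₁ := Gf_anti hρ hφ0 hφ1 hx1.1 le_rfl hx12
  have hGx21b : Gf ρ φ x₂ x₁ ≤ Gf ρ φ x₂ x₂ := by
    have h := Gf_diff hρ hφ0 hφ1 hx1.1 hx12 (le_refl x₂)
    have h2 : 0 ≤ ∫ s in x₁..x₂, ker ρ φ x₂ s :=
      intervalIntegral.integral_nonneg hx12 fun s hs =>
        ker_nonneg hρ (hx1.1.trans hs.1) hs.2
    linarith
  have hGx21n : 0 ≤ Gf ρ φ x₂ x₁ := Gf_nonneg hρ hφ0 hφ1 hx1.1 hx12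
  -- inner integrand integrable
  have hti : ∀ y ∈ Icc (0:ℝ) b, ∀ s ∈ Icc (0:ℝ) a,
      IntervalIntegrable (fun t => ker ρ φ y t * μ s t) volume 0 y := by
    intro y hy s hs
    apply IntervalIntegrable.mono_fun' ((ker_intervalIntegrable hρ hφ0 hφ1 hy.1).const_mul M)
    · exact ((ker_measurable ρ φ y).mul
        (hμm.comp (measurable_const.prodMk measurable_id))).aestronglyMeasurable
    · rw [uIoc_of_le hy.1]
      filter_upwards [ae_restrict_mem measurableSet_Ioc] with t ht
      have hk : 0 ≤ ker ρ φ y t := ker_nonneg hρ ht.1.le ht.2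
      rw [Real.norm_eq_abs, abs_mul, abs_of_nonneg hk]
      calc ker ρ φ y t * |μ s t| ≤ ker ρ φ y t * M :=
            mul_le_mul_of_nonneg_left (hμb s hs t ⟨ht.1.le, ht.2.trans hy.2⟩) hk
        _ = M * ker ρ φ y t := mul_comm _ _
  -- L bound
  have hLb : ∀ y ∈ Icc (0:ℝ) b, ∀ s ∈ Icc (0:ℝ) a, |L y s| ≤ M * Gf ρ φ b b := by
    intro y hy s hs
    have h1 : ‖L y s‖ ≤ |∫ t in (0:ℝ)..y, M * ker ρ φ y t| := by
      apply intervalIntegral.norm_integral_le_abs_of_norm_le _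
        ((ker_intervalIntegrable hρ hφ0 hφ1 hy.1).const_mul M)
      rw [uIoc_of_le hy.1]
      filter_upwards [ae_restrict_mem measurableSet_Ioc] with t ht
      have hk : 0 ≤ ker ρ φ y t := ker_nonneg hρ ht.1.le ht.2
      rw [Real.norm_eq_abs, abs_mul, abs_of_nonneg hk]
      calc ker ρ φ y t * |μ s t| ≤ ker ρ φ y t * M :=
            mul_le_mul_of_nonneg_left (hμb s hs t ⟨ht.1.le, ht.2.trans hy.2⟩) hk
        _ = M * ker ρ φ y t := mul_comm _ _
    rw [intervalIntegral.integral_const_mul, Gf_int hρ hφ0 hφ1 hy.1 le_rfl] at h1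
    have hGyy : 0 ≤ Gf ρ φ y y := Gf_nonneg hρ hφ0 hφ1 hy.1 le_rfl
    rw [Real.norm_eq_abs] at h1
    have hmono := Gf_self_mono (φ := φ) hρ hφ0 hy.1 hy.2
    calc |L y s| ≤ |M * Gf ρ φ y y| := h1
      _ = M * Gf ρ φ y y := abs_of_nonneg (by positivity)
      _ ≤ M * Gf ρ φ b b := by nlinarith
  -- L difference bound
  have hLd : ∀ s ∈ Icc (0:ℝ) a, |L y₂ s - L y₁ s| ≤ M * ΔY := by
    intro s hs
    have i1 : IntervalIntegrable (fun t => ker ρ φ y₂ t * μ s t) volume 0 y₁ :=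
      (hti y₂ hy2 s hs).mono_set'
        (by rw [uIoc_of_le hy1.1, uIoc_of_le hy2.1]; exact Ioc_subset_Ioc le_rfl hy12)
    have i2 : IntervalIntegrable (fun t => ker ρ φ y₂ t * μ s t) volume y₁ y₂ :=
      (hti y₂ hy2 s hs).mono_set'
        (by rw [uIoc_of_le hy12, uIoc_of_le hy2.1]; exact Ioc_subset_Ioc hy1.1 le_rfl)
    have i3 := hti y₁ hy1 s hs
    have k1 : IntervalIntegrable (ker ρ φ y₁) volume 0 y₁ :=
      ker_intervalIntegrable hρ hφ0 hφ1 hy1.1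
    have k2 : IntervalIntegrable (ker ρ φ y₂) volume 0 y₁ :=
      ker_intervalIntegrable' hρ hφ0 hφ1 le_rfl hy1.1 hy12
    have hsplit : L y₂ s
        = (∫ t in (0:ℝ)..y₁, ker ρ φ y₂ t * μ s t) + ∫ t in y₁..y₂, ker ρ φ y₂ t * μ s t :=
      (intervalIntegral.integral_add_adjacent_intervals i1 i2).symm
    have hT1 : |(∫ t in (0:ℝ)..y₁, ker ρ φ y₂ t * μ s t) - L y₁ s|
        ≤ M * (Gf ρ φ y₁ y₁ - Gf ρ φ y₂ y₁) := by
      rw [hL, ← intervalIntegral.integral_sub i1 i3]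
      have hb1 : ‖∫ t in (0:ℝ)..y₁, (ker ρ φ y₂ t * μ s t - ker ρ φ y₁ t * μ s t)‖
          ≤ |∫ t in (0:ℝ)..y₁, M * (ker ρ φ y₁ t - ker ρ φ y₂ t)| := by
        apply intervalIntegral.norm_integral_le_abs_of_norm_le _ ((k1.sub k2).const_mul M)
        apply ae_Ioo_helper hy1.1
        intro t ht
        have hka := ker_anti hρ hφ1 ht.1.le ht.2 hy12
        have hk2 : 0 ≤ ker ρ φ y₂ t := ker_nonneg hρ ht.1.le (ht.2.le.trans hy12)
        have hμ' := hμb s hs t ⟨ht.1.le, ht.2.le.trans hy1.2⟩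
        have habs : |ker ρ φ y₂ t * μ s t - ker ρ φ y₁ t * μ s t|
            = (ker ρ φ y₁ t - ker ρ φ y₂ t) * |μ s t| := by
          rw [← sub_mul, abs_mul, abs_of_nonpos (by linarith)]; ring
        rw [Real.norm_eq_abs, habs]
        calc (ker ρ φ y₁ t - ker ρ φ y₂ t) * |μ s t|
            ≤ (ker ρ φ y₁ t - ker ρ φ y₂ t) * M :=
              mul_le_mul_of_nonneg_left hμ' (by linarith)
          _ = M * (ker ρ φ y₁ t - ker ρ φ y₂ t) := mul_comm _ _
      rw [intervalIntegral.integral_const_mul, intervalIntegral.integral_sub k1 k2,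
        Gf_int hρ hφ0 hφ1 hy1.1 le_rfl, Gf_int hρ hφ0 hφ1 hy1.1 hy12] at hb1
      rw [Real.norm_eq_abs] at hb1
      exact hb1.trans (le_of_eq (abs_of_nonneg
        (mul_nonneg hM.le (sub_nonneg.mpr hG21a))))
    have hT2 : |∫ t in y₁..y₂, ker ρ φ y₂ t * μ s t|
        ≤ M * (Gf ρ φ y₂ y₂ - Gf ρ φ y₂ y₁) := by
      have hb2 : ‖∫ t in y₁..y₂, ker ρ φ y₂ t * μ s t‖
          ≤ |∫ t in y₁..y₂, M * ker ρ φ y₂ t| := by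
        apply intervalIntegral.norm_integral_le_abs_of_norm_le _
          ((ker_intervalIntegrable' hρ hφ0 hφ1 hy1.1 hy12 le_rfl).const_mul M)
        rw [uIoc_of_le hy12]
        filter_upwards [ae_restrict_mem measurableSet_Ioc] with t ht
        have hk : 0 ≤ ker ρ φ y₂ t := ker_nonneg hρ (hy1.1.trans ht.1.le) ht.2
        rw [Real.norm_eq_abs, abs_mul, abs_of_nonneg hk]
        calc ker ρ φ y₂ t * |μ s t| ≤ ker ρ φ y₂ t * M :=
              mul_le_mul_of_nonneg_left
                (hμb s hs t ⟨hy1.1.trans ht.1.le, ht.2.trans hy2.2⟩) hk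
          _ = M * ker ρ φ y₂ t := mul_comm _ _
      rw [intervalIntegral.integral_const_mul,
        ← Gf_diff hρ hφ0 hφ1 hy1.1 hy12 le_rfl] at hb2
      rw [Real.norm_eq_abs] at hb2
      exact hb2.trans (le_of_eq (abs_of_nonneg
        (mul_nonneg hM.le (sub_nonneg.mpr hG21b))))
    calc |L y₂ s - L y₁ s|
        = |((∫ t in (0:ℝ)..y₁, ker ρ φ y₂ t * μ s t) - L y₁ s)
            + ∫ t in y₁..y₂, ker ρ φ y₂ t * μ s t| := by rw [hsplit]; ring_nf
      _ ≤ |(∫ t in (0:ℝ)..y₁, ker ρ φ y₂ t * μ s t) - L y₁ s|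
            + |∫ t in y₁..y₂, ker ρ φ y₂ t * μ s t| := abs_add_le _ _
      _ ≤ M * (Gf ρ φ y₁ y₁ - Gf ρ φ y₂ y₁) + M * (Gf ρ φ y₂ y₂ - Gf ρ φ y₂ y₁) := by
          linarith
      _ = M * ΔY := by rw [hΔY]; ring
  -- measurability of L y
  have hLm : ∀ y, (0:ℝ) ≤ y → Measurable (L y) := by
    intro y hy
    have heq : L y = fun s => ∫ t in Ioc (0:ℝ) y, ker ρ φ y t * μ s t := by
      funext s; exact intervalIntegral.integral_of_le hy
    rw [heq]
    exact (StronglyMeasurable.integral_prod_right'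
      (f := fun p : ℝ × ℝ => ker ρ φ y p.2 * μ p.1 p.2)
      (((ker_measurable ρ φ y).comp measurable_snd).mul hμm).stronglyMeasurable).measurable
  -- outer integrability
  have hsi : ∀ x ∈ Icc (0:ℝ) a, ∀ y ∈ Icc (0:ℝ) b,
      IntervalIntegrable (fun s => ker ρ φ x s * L y s) volume 0 x := by
    intro x hx y hy
    apply IntervalIntegrable.mono_fun'
      ((ker_intervalIntegrable hρ hφ0 hφ1 hx.1).const_mul (M * Gf ρ φ b b))
    · exact ((ker_measurable ρ φ x).mul (hLm y hy.1)).aestronglyMeasurable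
    · rw [uIoc_of_le hx.1]
      filter_upwards [ae_restrict_mem measurableSet_Ioc] with s hsm
      have hk : 0 ≤ ker ρ φ x s := ker_nonneg hρ hsm.1.le hsm.2
      rw [Real.norm_eq_abs, abs_mul, abs_of_nonneg hk]
      calc ker ρ φ x s * |L y s| ≤ ker ρ φ x s * (M * Gf ρ φ b b) :=
            mul_le_mul_of_nonneg_left (hLb y hy s ⟨hsm.1.le, hsm.2.trans hx.2⟩) hk
        _ = (M * Gf ρ φ b b) * ker ρ φ x s := mul_comm _ _
  -- main decomposition
  have j1 : IntervalIntegrable (fun s => ker ρ φ x₂ s * L y₂ s) volume 0 x₁ :=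
    (hsi x₂ hx2 y₂ hy2).mono_set'
      (by rw [uIoc_of_le hx1.1, uIoc_of_le hx2.1]; exact Ioc_subset_Ioc le_rfl hx12)
  have j2 : IntervalIntegrable (fun s => ker ρ φ x₂ s * L y₂ s) volume x₁ x₂ :=
    (hsi x₂ hx2 y₂ hy2).mono_set'
      (by rw [uIoc_of_le hx12, uIoc_of_le hx2.1]; exact Ioc_subset_Ioc hx1.1 le_rfl)
  have j3 := hsi x₁ hx1 y₁ hy1
  have K1 : IntervalIntegrable (ker ρ φ x₁) volume 0 x₁ :=
    ker_intervalIntegrable hρ hφ0 hφ1 hx1.1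
  have K2 : IntervalIntegrable (ker ρ φ x₂) volume 0 x₁ :=
    ker_intervalIntegrable' hρ hφ0 hφ1 le_rfl hx1.1 hx12
  have hsplit : (∫ s in (0:ℝ)..x₂, ker ρ φ x₂ s * L y₂ s)
      = (∫ s in (0:ℝ)..x₁, ker ρ φ x₂ s * L y₂ s)
        + ∫ s in x₁..x₂, ker ρ φ x₂ s * L y₂ s :=
    (intervalIntegral.integral_add_adjacent_intervals j1 j2).symm
  have hT1 : |(∫ s in (0:ℝ)..x₁, ker ρ φ x₂ s * L y₂ s)
        - ∫ s in (0:ℝ)..x₁, ker ρ φ x₁ s * L y₁ s|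
      ≤ M * ΔY * Gf ρ φ x₂ x₁
        + M * Gf ρ φ b b * (Gf ρ φ x₁ x₁ - Gf ρ φ x₂ x₁) := by
    rw [← intervalIntegral.integral_sub j1 j3]
    have hb1 : ‖∫ s in (0:ℝ)..x₁, (ker ρ φ x₂ s * L y₂ s - ker ρ φ x₁ s * L y₁ s)‖
        ≤ |∫ s in (0:ℝ)..x₁,
            ((M * ΔY) * ker ρ φ x₂ s
              + (M * Gf ρ φ b b) * (ker ρ φ x₁ s - ker ρ φ x₂ s))| := by
      apply intervalIntegral.norm_integral_le_abs_of_norm_le _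
        ((K2.const_mul (M * ΔY)).add ((K1.sub K2).const_mul (M * Gf ρ φ b b)))
      apply ae_Ioo_helper hx1.1
      intro s hsm
      have hsmem : s ∈ Icc (0:ℝ) a := ⟨hsm.1.le, hsm.2.le.trans hx1.2⟩
      have hka := ker_anti hρ hφ1 hsm.1.le hsm.2 hx12
      have hk2 : 0 ≤ ker ρ φ x₂ s := ker_nonneg hρ hsm.1.le (hsm.2.le.trans hx12)
      have hdec : ker ρ φ x₂ s * L y₂ s - ker ρ φ x₁ s * L y₁ s
          = ker ρ φ x₂ s * (L y₂ s - L y₁ s) + (ker ρ φ x₂ s - ker ρ φ x₁ s) * L y₁ s := by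
        ring
      rw [Real.norm_eq_abs, hdec]
      calc |ker ρ φ x₂ s * (L y₂ s - L y₁ s) + (ker ρ φ x₂ s - ker ρ φ x₁ s) * L y₁ s|
          ≤ |ker ρ φ x₂ s * (L y₂ s - L y₁ s)|
            + |(ker ρ φ x₂ s - ker ρ φ x₁ s) * L y₁ s| := abs_add_le _ _
        _ = ker ρ φ x₂ s * |L y₂ s - L y₁ s|
            + (ker ρ φ x₁ s - ker ρ φ x₂ s) * |L y₁ s| := by
            have h0 : ker ρ φ x₂ s - ker ρ φ x₁ s ≤ 0 := by linarith
            rw [abs_mul, abs_mul, abs_of_nonneg hk2, abs_of_nonpos h0]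
            ring
        _ ≤ ker ρ φ x₂ s * (M * ΔY)
            + (ker ρ φ x₁ s - ker ρ φ x₂ s) * (M * Gf ρ φ b b) := by
            have h1 := hLd s hsmem
            have h2 := hLb y₁ hy1 s hsmem
            have := mul_le_mul_of_nonneg_left h1 hk2
            have := mul_le_mul_of_nonneg_left h2 (by linarith : 0 ≤ ker ρ φ x₁ s - ker ρ φ x₂ s)
            linarith
        _ = (M * ΔY) * ker ρ φ x₂ s
            + (M * Gf ρ φ b b) * (ker ρ φ x₁ s - ker ρ φ x₂ s) := by ring
    rw [intervalIntegral.integral_add (K2.const_mul _) ((K1.sub K2).const_mul _),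
      intervalIntegral.integral_const_mul, intervalIntegral.integral_const_mul,
      intervalIntegral.integral_sub K1 K2,
      Gf_int hρ hφ0 hφ1 hx1.1 hx12, Gf_int hρ hφ0 hφ1 hx1.1 le_rfl] at hb1
    rw [Real.norm_eq_abs] at hb1
    refine hb1.trans (le_of_eq (abs_of_nonneg ?_))
    have n1 := mul_nonneg (mul_nonneg hM.le hΔY0) hGx21n
    have n2 := mul_nonneg (mul_nonneg hM.le hGbb) (sub_nonneg.mpr hGx21a)
    linarith
  have hT2 : |∫ s in x₁..x₂, ker ρ φ x₂ s * L y₂ s|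
      ≤ M * Gf ρ φ b b * (Gf ρ φ x₂ x₂ - Gf ρ φ x₂ x₁) := by
    have hb2 : ‖∫ s in x₁..x₂, ker ρ φ x₂ s * L y₂ s‖
        ≤ |∫ s in x₁..x₂, (M * Gf ρ φ b b) * ker ρ φ x₂ s| := by
      apply intervalIntegral.norm_integral_le_abs_of_norm_le _
        ((ker_intervalIntegrable' hρ hφ0 hφ1 hx1.1 hx12 le_rfl).const_mul _)
      rw [uIoc_of_le hx12]
      filter_upwards [ae_restrict_mem measurableSet_Ioc] with s hsm
      have hk : 0 ≤ ker ρ φ x₂ s := ker_nonneg hρ (hx1.1.trans hsm.1.le) hsm.2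
      rw [Real.norm_eq_abs, abs_mul, abs_of_nonneg hk]
      calc ker ρ φ x₂ s * |L y₂ s|
          ≤ ker ρ φ x₂ s * (M * Gf ρ φ b b) :=
            mul_le_mul_of_nonneg_left
              (hLb y₂ hy2 s ⟨hx1.1.trans hsm.1.le, hsm.2.trans hx2.2⟩) hk
        _ = (M * Gf ρ φ b b) * ker ρ φ x₂ s := mul_comm _ _
    rw [intervalIntegral.integral_const_mul,
      ← Gf_diff hρ hφ0 hφ1 hx1.1 hx12 le_rfl] at hb2
    rw [Real.norm_eq_abs] at hb2
    exact hb2.trans (le_of_eq (abs_of_nonneg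
      (mul_nonneg (mul_nonneg hM.le hGbb) (sub_nonneg.mpr hGx21b))))
  simp_rw [intervalIntegral.integral_const_mul]
  calc |(∫ s in (0:ℝ)..x₂, ker ρ φ x₂ s * L y₂ s)
        - ∫ s in (0:ℝ)..x₁, ker ρ φ x₁ s * L y₁ s|
      = |((∫ s in (0:ℝ)..x₁, ker ρ φ x₂ s * L y₂ s)
            - ∫ s in (0:ℝ)..x₁, ker ρ φ x₁ s * L y₁ s)
          + ∫ s in x₁..x₂, ker ρ φ x₂ s * L y₂ s| := by rw [hsplit]; ring_nf
    _ ≤ |(∫ s in (0:ℝ)..x₁, ker ρ φ x₂ s * L y₂ s)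
            - ∫ s in (0:ℝ)..x₁, ker ρ φ x₁ s * L y₁ s|
          + |∫ s in x₁..x₂, ker ρ φ x₂ s * L y₂ s| := abs_add_le _ _
    _ ≤ M * ΔY * Gf ρ φ x₂ x₁ + M * Gf ρ φ b b * (Gf ρ φ x₁ x₁ - Gf ρ φ x₂ x₁)
          + M * Gf ρ φ b b * (Gf ρ φ x₂ x₂ - Gf ρ φ x₂ x₁) := by linarith
    _ = M * (ΔY * Gf ρ φ x₂ x₁
          + Gf ρ φ b b * (Gf ρ φ x₁ x₁ - Gf ρ φ x₂ x₁)
          + Gf ρ φ b b * (Gf ρ φ x₂ x₂ - Gf ρ φ x₂ x₁)) := by ring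


end KatAux

/-- The mixed Katugampola fractional integral of order `(φ₁, φ₂)` with parameters `(ρ₁, ρ₂)`. -/
noncomputable def mixedKatInt (ρ₁ ρ₂ φ₁ φ₂ : ℝ) (μ : ℝ → ℝ → ℝ) (x y : ℝ) : ℝ :=
  (ρ₁ ^ (1 - φ₁) * ρ₂ ^ (1 - φ₂)) / (Real.Gamma φ₁ * Real.Gamma φ₂) *
    ∫ s in (0:ℝ)..x, ∫ t in (0:ℝ)..y,
      s ^ (ρ₁ - 1) * t ^ (ρ₂ - 1) * (x ^ ρ₁ - s ^ ρ₁) ^ (φ₁ - 1) *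
        (y ^ ρ₂ - t ^ ρ₂) ^ (φ₂ - 1) * μ s t

open intervalIntegral Set KatAux

set_option maxHeartbeats 2000000 in
theorem uniform_equicontinuity_of_family (ρ φ a b M k : ℝ)
    (hρ : 0 < ρ) (hφ : φ ∈ Set.Ioo (0:ℝ) 1)
    (ha : 0 < a) (hb : 0 < b) (hM : 0 < M) (hk : 0 < k)
    (F : ℝ → ℝ → ℝ → ℝ)
    (hF : Continuous (fun p : ℝ × ℝ × ℝ => F p.1 p.2.1 p.2.2))
    (hFbound : ∀ x ∈ Set.Icc (0:ℝ) a, ∀ y ∈ Set.Icc (0:ℝ) b, ∀ u ∈ Set.Icc (-k) k,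
      |F x y u| ≤ M) :
    UniformContinuousOn (fun p : ℝ × ℝ => p.1 ^ (ρ * φ) * p.2 ^ (ρ * φ))
      (Set.Icc 0 a ×ˢ Set.Icc 0 b) ∧
    ∀ ε > (0:ℝ), ∃ δ > (0:ℝ), ∀ υ : ℝ → ℝ → ℝ,
      Continuous (fun p : ℝ × ℝ => υ p.1 p.2) →
      (∀ x ∈ Set.Icc (0:ℝ) a, ∀ y ∈ Set.Icc (0:ℝ) b, |υ x y| ≤ k) →
      ∀ p ∈ Set.Icc (0:ℝ) a ×ˢ Set.Icc (0:ℝ) b,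
        ∀ q ∈ Set.Icc (0:ℝ) a ×ˢ Set.Icc (0:ℝ) b,
          dist p q < δ →
            |mixedKatInt ρ ρ φ φ (fun s t => F s t (υ s t)) p.1 p.2 -
              mixedKatInt ρ ρ φ φ (fun s t => F s t (υ s t)) q.1 q.2| < ε := by
  obtain ⟨hφ0, hφ1⟩ := hφ
  constructor
  · apply (isCompact_Icc.prod isCompact_Icc).uniformContinuousOn_of_continuous
    exact (((Real.continuous_rpow_const (by positivity)).comp continuous_fst).mul
      ((Real.continuous_rpow_const (by positivity)).comp continuous_snd)).continuousOn
  intro ε hε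
  set c : ℝ := (ρ ^ (1 - φ) * ρ ^ (1 - φ)) / (Real.Gamma φ * Real.Gamma φ) with hc_def
  have hc : 0 < c := by
    apply div_pos (mul_pos (Real.rpow_pos_of_pos hρ _) (Real.rpow_pos_of_pos hρ _))
      (mul_pos (Real.Gamma_pos_of_pos hφ0) (Real.Gamma_pos_of_pos hφ0))
  set ε' : ℝ := ε / (2 * c * M + 1) with hε'_def
  have hε' : 0 < ε' := by positivity
  -- continuity of the modulus function
  have hGcont : Continuous fun p : ℝ × ℝ => Gf ρ φ p.1 p.2 := by
    unfold KatAux.Gf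
    apply Continuous.div_const
    apply Continuous.sub
    · exact (Real.continuous_rpow_const hφ0.le).comp
        (((Real.continuous_rpow_const hρ.le).comp continuous_fst).sub continuous_const)
    · exact (Real.continuous_rpow_const hφ0.le).comp
        (((Real.continuous_rpow_const hρ.le).comp continuous_fst).sub
          ((Real.continuous_rpow_const hρ.le).comp continuous_snd))
  set Φ : (ℝ × ℝ) × (ℝ × ℝ) → ℝ := fun w =>
    (Gf ρ φ w.2.2 w.2.2 + Gf ρ φ w.1.2 w.1.2 - 2 * Gf ρ φ w.2.2 w.1.2) * Gf ρ φ w.2.1 w.1.1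
    + Gf ρ φ b b * (Gf ρ φ w.1.1 w.1.1 - Gf ρ φ w.2.1 w.1.1)
    + Gf ρ φ b b * (Gf ρ φ w.2.1 w.2.1 - Gf ρ φ w.2.1 w.1.1) with hΦ_def
  have hg2 : ∀ (f g : (ℝ × ℝ) × (ℝ × ℝ) → ℝ), Continuous f → Continuous g →
      Continuous (fun w => Gf ρ φ (f w) (g w)) := fun f g hf hg =>
    hGcont.comp (hf.prodMk hg)
  have hΦcont : Continuous Φ := by
    rw [hΦ_def]
    apply Continuous.add
    apply Continuous.add
    · exact (((hg2 _ _ continuous_snd.snd continuous_snd.snd).add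
        (hg2 _ _ continuous_fst.snd continuous_fst.snd)).sub
        (continuous_const.mul (hg2 _ _ continuous_snd.snd continuous_fst.snd))).mul
        (hg2 _ _ continuous_snd.fst continuous_fst.fst)
    · exact continuous_const.mul ((hg2 _ _ continuous_fst.fst continuous_fst.fst).sub
        (hg2 _ _ continuous_snd.fst continuous_fst.fst))
    · exact continuous_const.mul ((hg2 _ _ continuous_snd.fst continuous_snd.fst).sub
        (hg2 _ _ continuous_snd.fst continuous_fst.fst))
  set K : Set (ℝ × ℝ) := Set.Icc 0 a ×ˢ Set.Icc 0 b with hK_def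
  have hKcomp : IsCompact (K ×ˢ K) :=
    ((isCompact_Icc.prod isCompact_Icc).prod (isCompact_Icc.prod isCompact_Icc))
  have hUC := hKcomp.uniformContinuousOn_of_continuous hΦcont.continuousOn
  rw [Metric.uniformContinuousOn_iff] at hUC
  obtain ⟨δ, hδ, hUCδ⟩ := hUC ε' hε'
  refine ⟨δ, hδ, ?_⟩
  intro υ hυc hυb p hp q hq hpq
  set μf : ℝ → ℝ → ℝ := fun s t => F s t (υ s t) with hμf_def
  have hμm : Measurable fun w : ℝ × ℝ => μf w.1 w.2 :=
    (hF.comp (continuous_fst.prodMk (continuous_snd.prodMk hυc))).measurable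
  have hμb : ∀ s ∈ Set.Icc (0:ℝ) a, ∀ t ∈ Set.Icc (0:ℝ) b, |μf s t| ≤ M := by
    intro s hs t ht
    have h := abs_le.mp (hυb s hs t ht)
    exact hFbound s hs t ht _ ⟨h.1, h.2⟩
  -- rewrite mixedKatInt
  have hrew : ∀ x y : ℝ, mixedKatInt ρ ρ φ φ μf x y
      = c * ∫ s in (0:ℝ)..x, ∫ t in (0:ℝ)..y, ker ρ φ x s * (ker ρ φ y t * μf s t) := by
    intro x y
    unfold mixedKatInt
    rw [← hc_def]
    congr 1
    apply intervalIntegral.integral_congr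
    intro s _
    apply intervalIntegral.integral_congr
    intro t _
    unfold KatAux.ker
    ring
  set J : ℝ × ℝ → ℝ := fun z =>
    ∫ s in (0:ℝ)..z.1, ∫ t in (0:ℝ)..z.2, ker ρ φ z.1 s * (ker ρ φ z.2 t * μf s t) with hJ
  set r : ℝ × ℝ := (min p.1 q.1, min p.2 q.2) with hr_def
  have hrK : r ∈ K := by
    constructor
    · exact ⟨le_min hp.1.1 hq.1.1, (min_le_left _ _).trans hp.1.2⟩
    · exact ⟨le_min hp.2.1 hq.2.1, (min_le_left _ _).trans hp.2.2⟩
  have hcoord : ∀ u v : ℝ, dist u (min u v) ≤ dist u v := by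
    intro u v
    rcases le_total u v with h | h
    · rw [min_eq_left h, dist_self]; exact dist_nonneg
    · rw [min_eq_right h]
  have hdpr : dist p r ≤ dist p q := by
    rw [Prod.dist_eq, Prod.dist_eq]
    exact max_le_max (hcoord p.1 q.1) (hcoord p.2 q.2)
  have hdqr : dist q r ≤ dist p q := by
    rw [Prod.dist_eq, Prod.dist_eq, dist_comm p.1 q.1, dist_comm p.2 q.2]
    rw [hr_def]
    simp only [min_comm p.1 q.1, min_comm p.2 q.2]
    exact max_le_max (hcoord q.1 p.1) (hcoord q.2 p.2)
  have hΦrr : Φ (r, r) = 0 := by rw [hΦ_def]; ring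
  have hΦsmall : ∀ z ∈ K, dist z r ≤ dist p q → Φ (r, z) < ε' := by
    intro z hz hd
    have h1 : ((r, z) : (ℝ × ℝ) × (ℝ × ℝ)) ∈ K ×ˢ K := ⟨hrK, hz⟩
    have h2 : ((r, r) : (ℝ × ℝ) × (ℝ × ℝ)) ∈ K ×ˢ K := ⟨hrK, hrK⟩
    have h3 : dist ((r, z) : (ℝ × ℝ) × (ℝ × ℝ)) (r, r) < δ := by
      rw [Prod.dist_eq]
      simp only [dist_self]
      rw [max_eq_right dist_nonneg]
      exact lt_of_le_of_lt hd hpq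
    have h4 := hUCδ _ h1 _ h2 h3
    rw [Real.dist_eq, hΦrr, sub_zero] at h4
    exact lt_of_le_of_lt (le_abs_self _) h4
  -- main estimates
  have hest : ∀ z ∈ K, r.1 ≤ z.1 → r.2 ≤ z.2 → |J z - J r| ≤ M * Φ (r, z) := by
    intro z hz h1 h2
    have := main_estimate hρ hφ0 hφ1 hM hμm hμb
      (x₁ := r.1) (x₂ := z.1) (y₁ := r.2) (y₂ := z.2)
      hrK.1 hz.1 hrK.2 hz.2 h1 h2
    calc |J z - J r| ≤ M * ((Gf ρ φ z.2 z.2 + Gf ρ φ r.2 r.2 - 2 * Gf ρ φ z.2 r.2)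
          * Gf ρ φ z.1 r.1
        + Gf ρ φ b b * (Gf ρ φ r.1 r.1 - Gf ρ φ z.1 r.1)
        + Gf ρ φ b b * (Gf ρ φ z.1 z.1 - Gf ρ φ z.1 r.1)) := this
      _ = M * Φ (r, z) := by rw [hΦ_def]
  have hJp := hest p hp (min_le_left _ _) (min_le_left _ _)
  have hJq := hest q hq (min_le_right _ _) (min_le_right _ _)
  have hΦp := hΦsmall p hp hdpr
  have hΦq := hΦsmall q hq hdqr
  have hA : ∀ z : ℝ × ℝ, mixedKatInt ρ ρ φ φ μf z.1 z.2 = c * J z := fun z => hrew z.1 z.2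
  rw [hA p, hA q]
  have hsum : |c * J p - c * J q| ≤ c * |J p - J r| + c * |J q - J r| := by
    calc |c * J p - c * J q| = |c * ((J p - J r) - (J q - J r))| := by ring_nf
      _ = c * |(J p - J r) - (J q - J r)| := by rw [abs_mul, abs_of_pos hc]
      _ ≤ c * (|J p - J r| + |J q - J r|) := by
          apply mul_le_mul_of_nonneg_left (abs_sub _ _) hc.le
      _ = c * |J p - J r| + c * |J q - J r| := by ring
  have hfin : c * |J p - J r| + c * |J q - J r| < ε := by
    have e1 : c * |J p - J r| ≤ c * (M * Φ (r, p)) := mul_le_mul_of_nonneg_left hJp hc.le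
    have e2 : c * |J q - J r| ≤ c * (M * Φ (r, q)) := mul_le_mul_of_nonneg_left hJq hc.le
    have e3 : c * (M * Φ (r, p)) < c * (M * ε') := by
      apply mul_lt_mul_of_pos_left _ hc
      exact mul_lt_mul_of_pos_left hΦp hM
    have e4 : c * (M * Φ (r, q)) < c * (M * ε') := by
      apply mul_lt_mul_of_pos_left _ hc
      exact mul_lt_mul_of_pos_left hΦq hM
    have e5 : 2 * (c * (M * ε')) < ε := by
      have h0 : (0:ℝ) < 2 * c * M + 1 := by positivity
      have hlt : (2 * c * M) / (2 * c * M + 1) < 1 := by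
        rw [div_lt_one h0]; linarith
      calc 2 * (c * (M * ε')) = (2 * c * M / (2 * c * M + 1)) * ε := by
            rw [hε'_def]; ring
        _ < 1 * ε := mul_lt_mul_of_pos_right hlt hε
        _ = ε := one_mul ε
    calc c * |J p - J r| + c * |J q - J r|
        ≤ c * (M * Φ (r, p)) + c * (M * Φ (r, q)) := add_le_add e1 e2
      _ < c * (M * ε') + c * (M * ε') := add_lt_add e3 e4
      _ = 2 * (c * (M * ε')) := by ring
      _ < ε := e5
  exact lt_of_le_of_lt hsum hfin
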